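/- If k = 4·ln(n)/ε with ε ∈ (0,1), n ≥ 2, and k ≤ n, then α_k · n^{-1/k} > 1 - ε, where α_k = (k+1)^{-1/k}(1 - 1/(k+1)). -/

import Mathlib

/-- If k = 4·ln(n)/ε with ε ∈ (0,1), n ≥ 2 and k ≤ n, then
α_k · n^{-1/k} > 1 - ε, where α_k = (k+1)^{-1/k}(1 - 1/(k+1)). -/
theorem stmt5 (n : ℕ) (hn : 2 ≤ n) (ε : ℝ) (hε0 : 0 < ε) (hε1 : ε < 1)
    (k : ℝ) (hk : k = 4 * Real.log n / ε) (hkn : k ≤ n) :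
    1 - ε < (k + 1) ^ (-(1 : ℝ) / k) * (1 - 1 / (k + 1)) * (n : ℝ) ^ (-(1 : ℝ) / k) := by
  have hL2 : (0.6931471803 : ℝ) < Real.log 2 := Real.log_two_gt_d9
  have hLn : Real.log 2 ≤ Real.log n :=
    Real.log_le_log (by norm_num) (by exact_mod_cast hn)
  have hL : 0 < Real.log n := by linarith
  have hk0 : 0 < k := by
    rw [hk]; exact div_pos (by linarith) hε0
  have hkε : k * ε = 4 * Real.log n := by
    rw [hk]; field_simp
  have hk2 : 2.7 < k := by nlinarith
  have hdiv : Real.log n / k = ε / 4 := by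
    rw [hk]; field_simp
  have e1 : ((n : ℝ)) ^ (-(1 : ℝ) / k) = Real.exp (-(ε / 4)) := by
    rw [Real.rpow_def_of_pos (by positivity)]
    congr 1
    have : Real.log n * (-(1 : ℝ) / k) = -(Real.log n / k) := by ring
    rw [this, hdiv]
  have e2 : (k + 1) ^ (-(1 : ℝ) / k) = Real.exp (-(Real.log (k + 1) / k)) := by
    rw [Real.rpow_def_of_pos (by linarith)]
    congr 1
    ring
  have e3 : Real.exp (-(1 / k)) ≤ 1 - 1 / (k + 1) := by
    have h1 : (k + 1) / k ≤ Real.exp (1 / k) := by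
      have h2 := Real.add_one_le_exp (1 / k)
      have h3 : (k + 1) / k = 1 / k + 1 := by field_simp; ring
      linarith
    rw [Real.exp_neg]
    have h5 : ((k + 1) / k)⁻¹ = 1 - 1 / (k + 1) := by
      field_simp
      ring
    calc (Real.exp (1 / k))⁻¹ ≤ ((k + 1) / k)⁻¹ :=
          inv_anti₀ (by positivity) h1
      _ = 1 - 1 / (k + 1) := h5
  -- log (k+1) + 1 ≤ log (4k)
  have ha : Real.log (k + 1) + 1 ≤ Real.log (4 * k) := by
    have hpos : (0 : ℝ) < 4 * k / (k + 1) := by positivity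
    have hexp1 : Real.exp 1 ≤ 4 * k / (k + 1) := by
      have := Real.exp_one_lt_d9
      rw [le_div_iff₀ (by linarith)]
      nlinarith
    have h1 : 1 ≤ Real.log (4 * k / (k + 1)) :=
      (Real.le_log_iff_exp_le hpos).mpr hexp1
    have h2 : Real.log (4 * k / (k + 1)) = Real.log (4 * k) - Real.log (k + 1) :=
      Real.log_div (by positivity) (by positivity)
    linarith
  have hb : Real.log (4 * k) ≤ Real.log (4 * n) := by
    apply Real.log_le_log (by positivity)
    linarith
  have hc : Real.log (4 * n) ≤ 3 * Real.log n := by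
    have h4 : Real.log (4 * n) = Real.log 4 + Real.log n :=
      Real.log_mul (by norm_num) (by positivity)
    have h5 : Real.log 4 = 2 * Real.log 2 := by
      rw [show (4 : ℝ) = 2 ^ 2 by norm_num, Real.log_pow]; push_cast; ring
    linarith
  have hkey : Real.log (k + 1) + 1 ≤ 3 / 4 * (k * ε) := by
    rw [hkε]; linarith
  have hexp : -ε ≤ -(Real.log (k + 1) / k) + -(1 / k) + -(ε / 4) := by
    have h6 : (Real.log (k + 1) + 1) / k ≤ 3 * ε / 4 := by
      rw [div_le_iff₀ hk0]; nlinarith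
    have h7 : Real.log (k + 1) / k + 1 / k = (Real.log (k + 1) + 1) / k := by ring
    linarith
  calc 1 - ε < Real.exp (-ε) := by
        have := Real.add_one_lt_exp (show -ε ≠ 0 by intro h; simp at h; linarith)
        linarith
    _ ≤ Real.exp (-(Real.log (k + 1) / k) + -(1 / k) + -(ε / 4)) :=
        Real.exp_le_exp.mpr hexp
    _ = Real.exp (-(Real.log (k + 1) / k)) * Real.exp (-(1 / k)) * Real.exp (-(ε / 4)) := by
        rw [Real.exp_add, Real.exp_add]
    _ ≤ (k + 1) ^ (-(1 : ℝ) / k) * (1 - 1 / (k + 1)) * (n : ℝ) ^ (-(1 : ℝ) / k) := by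
        rw [e1, e2]
        gcongr
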